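/- Let d ≥ 1, λ > 0, and let x : Fin d → Fin d be a sequence of episode outcomes such that for every t ∈ Fin d, writing N_t j := #{u ∈ Fin d : u < t and x u = j} for the counts of outcomes before episode t, the outcome x t maximizes over s ∈ Fin d the post-addition coverage (Σ_{j ∈ Fin d} 1/(N_t j + (if j = s then 1 else 0) + λ))⁻¹. Then x is a bijection of Fin d; consequently the final counts satisfy #{u : x u = j} = 1 for every j, each outcome occurs with empirical frequency 1/d, and the final coverage equals (1 + λ)/d, which is the maximum of (Σ_j 1/(N j + λ))⁻¹ over all count vectors N : Fin d → ℕ with Σ_j N j = d. -/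

import Mathlib

open Finset

private lemma greedy_sum_split (d : ℕ) (lam : ℝ) (hlam : 0 < lam)
    (c : Fin d → ℕ) (s : Fin d) :
    (∑ j : Fin d, 1 / ((c j : ℝ) + (if j = s then 1 else 0) + lam))
      = (∑ j : Fin d, 1 / ((c j : ℝ) + lam))
        - 1 / (((c s : ℝ) + lam) * ((c s : ℝ) + 1 + lam)) := by
  have key : ∀ j : Fin d,
      1 / ((c j : ℝ) + (if j = s then 1 else 0) + lam)
        = 1 / ((c j : ℝ) + lam)
          - (if j = s then 1 / (((c s : ℝ) + lam) * ((c s : ℝ) + 1 + lam)) else 0) := by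
    intro j
    by_cases h : j = s
    · subst h
      simp only [if_pos rfl, if_true]
      have h1 : (0:ℝ) < (c j : ℝ) + lam := by positivity
      have h2 : (0:ℝ) < (c j : ℝ) + 1 + lam := by positivity
      field_simp
      ring
    · simp [h]
  rw [Finset.sum_congr rfl (fun j _ => key j), Finset.sum_sub_distrib,
    Finset.sum_ite_eq' univ s, if_pos (Finset.mem_univ s)]

/-- Deterministic skeleton of Proposition 1: if at each episode `t` the outcome
`x t` maximizes the post-addition coverage given the counts of outcomes before
episode `t`, then `x` is a bijection of `Fin d`, the final count of each outcome
is `1` (empirical frequency `1/d`), and the final coverage equals `(1+λ)/d`,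
which is the maximum coverage over all count vectors with total count `d`. -/
theorem greedy_coverage_policy_is_optimal
    (d : ℕ) (hd : 1 ≤ d) (lam : ℝ) (hlam : 0 < lam)
    (x : Fin d → Fin d)
    (hgreedy : ∀ t : Fin d, ∀ s : Fin d,
      (∑ j : Fin d,
          1 / (((Finset.univ.filter (fun u : Fin d => u < t ∧ x u = j)).card : ℝ)
                + (if j = s then 1 else 0) + lam))⁻¹
        ≤ (∑ j : Fin d,
          1 / (((Finset.univ.filter (fun u : Fin d => u < t ∧ x u = j)).card : ℝ)
                + (if j = x t then 1 else 0) + lam))⁻¹) :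
    Function.Bijective x ∧
    (∀ j : Fin d, (Finset.univ.filter (fun u : Fin d => x u = j)).card = 1) ∧
    (∀ j : Fin d,
      ((Finset.univ.filter (fun u : Fin d => x u = j)).card : ℝ) / d = 1 / d) ∧
    (∑ j : Fin d,
        1 / (((Finset.univ.filter (fun u : Fin d => x u = j)).card : ℝ) + lam))⁻¹
      = (1 + lam) / d ∧
    (∀ N : Fin d → ℕ, (∑ j : Fin d, N j) = d →
      (∑ j : Fin d, 1 / ((N j : ℝ) + lam))⁻¹ ≤ (1 + lam) / d) := by
  -- counts before episode t
  set C : Fin d → Fin d → ℕ :=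
    fun t j => (Finset.univ.filter (fun u : Fin d => u < t ∧ x u = j)).card with hC
  -- total counts before episode t equal t
  have hsumC : ∀ t : Fin d, (∑ j : Fin d, C t j) = (t : ℕ) := by
    intro t
    have h1 : (univ.filter (fun u : Fin d => u < t)).card = (t : ℕ) := by
      have : (univ.filter (fun u : Fin d => u < t)) = Finset.Iio t := by
        ext u; simp
      rw [this, Fin.card_Iio]
    rw [← h1]
    rw [Finset.card_eq_sum_card_fiberwise (f := x) (t := univ)
      (fun u _ => Finset.mem_univ (x u))]
    apply Finset.sum_congr rfl
    intro j _
    rw [hC]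
    congr 1
    rw [Finset.filter_filter]
  -- at each episode, the chosen outcome has count 0
  have hfresh : ∀ t : Fin d, C t (x t) = 0 := by
    intro t
    -- some outcome has count 0
    obtain ⟨s, hs⟩ : ∃ s : Fin d, C t s = 0 := by
      by_contra h
      push_neg at h
      have : d ≤ ∑ j : Fin d, C t j := by
        calc d = ∑ _j : Fin d, 1 := by simp
        _ ≤ ∑ j : Fin d, C t j :=
          Finset.sum_le_sum (fun j _ => Nat.one_le_iff_ne_zero.mpr (h j))
      rw [hsumC t] at this
      exact absurd this (Nat.not_le.mpr t.isLt)
    -- positivity of the two sums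
    have hpos : ∀ s' : Fin d,
        (0:ℝ) < ∑ j : Fin d, 1 / ((C t j : ℝ) + (if j = s' then 1 else 0) + lam) := by
      intro s'
      apply Finset.sum_pos
      · intro j _
        have : (0:ℝ) < (C t j : ℝ) + (if j = s' then 1 else 0) + lam := by
          have : (0:ℝ) ≤ (if j = s' then (1:ℝ) else 0) := by positivity
          positivity
        positivity
      · exact Finset.univ_nonempty_iff.mpr ⟨t⟩
    have hinv := hgreedy t s
    have hsum : (∑ j : Fin d, 1 / ((C t j : ℝ) + (if j = x t then 1 else 0) + lam))
        ≤ ∑ j : Fin d, 1 / ((C t j : ℝ) + (if j = s then 1 else 0) + lam) :=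
      (inv_le_inv₀ (hpos s) (hpos (x t))).mp hinv
    rw [greedy_sum_split d lam hlam (C t) s, greedy_sum_split d lam hlam (C t) (x t)]
      at hsum
    have hΔ : 1 / (((C t s : ℝ) + lam) * ((C t s : ℝ) + 1 + lam))
        ≤ 1 / (((C t (x t) : ℝ) + lam) * ((C t (x t) : ℝ) + 1 + lam)) := by
      linarith
    rw [hs] at hΔ
    simp only [Nat.cast_zero, zero_add] at hΔ
    by_contra hne
    have h1 : (1:ℝ) ≤ (C t (x t) : ℝ) := by
      exact_mod_cast Nat.one_le_iff_ne_zero.mpr hne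
    have hp1 : (0:ℝ) < (C t (x t) : ℝ) + lam := by positivity
    have hp2 : (0:ℝ) < (C t (x t) : ℝ) + 1 + lam := by positivity
    have hp3 : (0:ℝ) < lam * (lam + 1) := by positivity
    rw [div_le_div_iff₀ (by positivity) (by positivity)] at hΔ
    nlinarith
  -- injectivity
  have hinj : Function.Injective x := by
    intro a b hab
    by_contra hne
    rcases lt_or_gt_of_ne hne with h | h
    · have : a ∈ univ.filter (fun u : Fin d => u < b ∧ x u = x b) :=
        Finset.mem_filter.mpr ⟨Finset.mem_univ a, h, hab⟩
      have hcard := hfresh b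
      rw [hC] at hcard
      simp only [Finset.card_eq_zero] at hcard
      rw [hcard] at this
      exact absurd this (Finset.notMem_empty a)
    · have : b ∈ univ.filter (fun u : Fin d => u < a ∧ x u = x a) :=
        Finset.mem_filter.mpr ⟨Finset.mem_univ b, h, hab.symm⟩
      have hcard := hfresh a
      rw [hC] at hcard
      simp only [Finset.card_eq_zero] at hcard
      rw [hcard] at this
      exact absurd this (Finset.notMem_empty b)
  have hbij : Function.Bijective x := Finite.injective_iff_bijective.mp hinj
  -- final counts are 1
  have hcount : ∀ j : Fin d, (univ.filter (fun u : Fin d => x u = j)).card = 1 := by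
    intro j
    obtain ⟨a, ha⟩ := hbij.2 j
    have : univ.filter (fun u : Fin d => x u = j) = {a} := by
      ext u
      simp only [Finset.mem_filter, Finset.mem_univ, true_and, Finset.mem_singleton]
      constructor
      · intro hu; exact hinj (hu.trans ha.symm)
      · intro hu; subst hu; exact ha
    rw [this, Finset.card_singleton]
  have hdpos : (0:ℝ) < d := by exact_mod_cast hd
  have hcov : (∑ j : Fin d,
      1 / (((univ.filter (fun u : Fin d => x u = j)).card : ℝ) + lam))⁻¹
        = (1 + lam) / d := by
    have : ∀ j : Fin d,
        1 / (((univ.filter (fun u : Fin d => x u = j)).card : ℝ) + lam)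
          = 1 / (1 + lam) := by
      intro j; rw [hcount j]; norm_num
    rw [Finset.sum_congr rfl (fun j _ => this j), Finset.sum_const,
      Finset.card_univ, Fintype.card_fin]
    have h1 : (0:ℝ) < 1 + lam := by positivity
    rw [nsmul_eq_mul]
    field_simp
  refine ⟨hbij, hcount, ?_, hcov, ?_⟩
  · intro j; rw [hcount j]; norm_num
  · -- optimality via Cauchy–Schwarz
    intro N hN
    have hpos : ∀ j : Fin d, (0:ℝ) < (N j : ℝ) + lam := by
      intro j; positivity
    have hT : (0:ℝ) < ∑ j : Fin d, 1 / ((N j : ℝ) + lam) := by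
      apply Finset.sum_pos (fun j _ => by positivity)
      exact Finset.univ_nonempty_iff.mpr ⟨⟨0, hd⟩⟩
    have hCS := Finset.sum_mul_sq_le_sq_mul_sq univ
      (fun j : Fin d => Real.sqrt ((N j : ℝ) + lam))
      (fun j : Fin d => (Real.sqrt ((N j : ℝ) + lam))⁻¹)
    have hone : ∀ j : Fin d,
        Real.sqrt ((N j : ℝ) + lam) * (Real.sqrt ((N j : ℝ) + lam))⁻¹ = 1 := by
      intro j
      exact mul_inv_cancel₀ (ne_of_gt (Real.sqrt_pos.mpr (hpos j)))
    have hsq1 : ∀ j : Fin d, Real.sqrt ((N j : ℝ) + lam) ^ 2 = (N j : ℝ) + lam :=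
      fun j => Real.sq_sqrt (le_of_lt (hpos j))
    have hsq2 : ∀ j : Fin d,
        ((Real.sqrt ((N j : ℝ) + lam))⁻¹) ^ 2 = 1 / ((N j : ℝ) + lam) := by
      intro j
      rw [inv_pow, hsq1 j, one_div]
    rw [Finset.sum_congr rfl (fun j _ => hone j), Finset.sum_congr rfl (fun j _ => hsq1 j),
      Finset.sum_congr rfl (fun j _ => hsq2 j), Finset.sum_const, Finset.card_univ,
      Fintype.card_fin, nsmul_eq_mul, mul_one] at hCS
    have hsumN : (∑ j : Fin d, ((N j : ℝ) + lam)) = d + d * lam := by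
      rw [Finset.sum_add_distrib, Finset.sum_const, Finset.card_univ, Fintype.card_fin,
        nsmul_eq_mul]
      have : (∑ j : Fin d, (N j : ℝ)) = d := by
        rw [← Nat.cast_sum, hN]
      rw [this]
    rw [hsumN] at hCS
    -- (d:ℝ)^2 ≤ (d + d*lam) * T, so d/(1+lam) ≤ T
    have hlow : (d : ℝ) / (1 + lam) ≤ ∑ j : Fin d, 1 / ((N j : ℝ) + lam) := by
      rw [div_le_iff₀ (by positivity)]
      nlinarith
    calc (∑ j : Fin d, 1 / ((N j : ℝ) + lam))⁻¹
        ≤ ((d : ℝ) / (1 + lam))⁻¹ := by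
          apply inv_anti₀ (by positivity) hlow
      _ = (1 + lam) / d := by rw [inv_div]
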